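/- Every signed graph (G,σ) on a finite simple graph G with mad(G) < 3 admits an edge-sign preserving homomorphism to DSG(K_8,M); equivalently, every such signed graph admits a homomorphism to (K_8,M). -/

import Mathlib

open SimpleGraph

/-- The sign of a walk in a signed graph `(G, σ)`: the product of the signs of its edges,
counted with multiplicity. -/
def walkSign {V : Type*} {G : SimpleGraph V} (σ : Sym2 V → ℤˣ) {u v : V}
    (w : G.Walk u v) : ℤˣ :=
  (w.edges.map σ).prod

/-- A homomorphism of signed graphs: a graph homomorphism which preserves the signs of
closed walks. -/
def IsSignedHom {U V : Type*} (G : SimpleGraph U) (σ : Sym2 U → ℤˣ)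
    (H : SimpleGraph V) (π : Sym2 V → ℤˣ) (f : G →g H) : Prop :=
  ∀ (u : U) (w : G.Walk u u), walkSign π (w.map f) = walkSign σ w

/-- `(G, σ)` admits a homomorphism to `(H, π)`. -/
def SignedHom {U V : Type*} (G : SimpleGraph U) (σ : Sym2 U → ℤˣ)
    (H : SimpleGraph V) (π : Sym2 V → ℤˣ) : Prop :=
  ∃ f : G →g H, IsSignedHom G σ H π f

/-- An edge-sign preserving homomorphism: a graph homomorphism `φ : G → H` with
`π(φ(u)φ(v)) = σ(uv)` for every edge `uv` of `G`. -/
def IsESPHom {U V : Type*} (G : SimpleGraph U) (σ : Sym2 U → ℤˣ)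
    (H : SimpleGraph V) (π : Sym2 V → ℤˣ) (f : G →g H) : Prop :=
  ∀ u v : U, G.Adj u v → π s(f u, f v) = σ s(u, v)

/-- `(G, σ)` admits an edge-sign preserving homomorphism to `(H, π)`. -/
def ESPHom {U V : Type*} (G : SimpleGraph U) (σ : Sym2 U → ℤˣ)
    (H : SimpleGraph V) (π : Sym2 V → ℤˣ) : Prop :=
  ∃ f : G →g H, IsESPHom G σ H π f

/-- The underlying graph of the double switching graph `DSG(H, π)`. -/
def DSGGraph {V : Type*} (H : SimpleGraph V) : SimpleGraph (V × ℤˣ) where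
  Adj a b := H.Adj a.1 b.1
  symm := ⟨fun _ _ h => H.adj_symm h⟩
  loopless := ⟨fun a h => H.irrefl h⟩

/-- The signature of the double switching graph `DSG(H, π)`: the edge from `(x, s)` to `(y, t)`
carries the sign `s * t * π(xy)`. -/
def DSGSign {V : Type*} (π : Sym2 V → ℤˣ) : Sym2 (V × ℤˣ) → ℤˣ :=
  Sym2.lift ⟨fun a b => a.2 * b.2 * π s(a.1, b.1), by
    intro a b
    dsimp only
    rw [Sym2.eq_swap, mul_comm a.2 b.2]⟩

/-- The signature on the complete graph `K_n` (with `n` even, vertices `0, …, n-1`) whose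
negative edges form the perfect matching `{01, 23, 45, …}`. For `n = 8` this is `(K_8, M)`
with negative edges `12, 34, 56, 78`. -/
def matchSign (n : ℕ) : Sym2 (Fin n) → ℤˣ :=
  Sym2.lift ⟨fun a b => if (a : ℕ) / 2 = (b : ℕ) / 2 then -1 else 1, by
    intro a b
    simp only [eq_comm]⟩

/-- `MadLT G r` says that the maximum average degree of `G` is (strictly) less than `r`:
every nonempty subgraph `H` satisfies `2|E(H)| < r·|V(H)|`. -/
def MadLT {V : Type*} (G : SimpleGraph V) (r : ℚ) : Prop :=
  ∀ H : G.Subgraph, H.verts.Nonempty →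
    (2 * H.edgeSet.ncard : ℚ) < r * (H.verts.ncard : ℚ)

/-! ### Auxiliary development -/

abbrev T8 := Fin 8 × ℤˣ

def Eok (p q : T8) (s : ℤˣ) : Prop :=
  p.1 ≠ q.1 ∧ p.2 * q.2 * (if (p.1 : ℕ) / 2 = (q.1 : ℕ) / 2 then (-1 : ℤˣ) else 1) = s

instance (p q : T8) (s : ℤˣ) : Decidable (Eok p q s) := by unfold Eok; infer_instance

def BadP (p : T8) (b : ℕ) (e : ℤˣ) : Prop := (p.1 : ℕ) / 2 = b ∧ p.2 = e

instance (p : T8) (b : ℕ) (e : ℤˣ) : Decidable (BadP p b e) := by unfold BadP; infer_instance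

def mkblk (x : Fin 8) : Fin 4 := ⟨(x : ℕ) / 2, by omega⟩

set_option maxHeartbeats 4000000 in
set_option maxRecDepth 10000 in
theorem LBpath : ∀ (p w : T8) (s t : ℤˣ), ¬ BadP p ((w.1:ℕ)/2) (-(w.2*t*s)) →
    ∃ r, Eok p r s ∧ Eok r w t := by decide

set_option maxHeartbeats 16000000 in
set_option maxRecDepth 10000 in
theorem LEXT2 : ∀ (y1 y2 p0 : T8) (s1 s2 : ℤˣ), Eok p0 y1 s1 → Eok p0 y2 s2 →
    ∀ (b : Fin 4) (e : ℤˣ), ∃ p, Eok p y1 s1 ∧ Eok p y2 s2 ∧ ¬ BadP p (b:ℕ) e := by decide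

set_option maxHeartbeats 8000000 in
set_option maxRecDepth 10000 in
theorem LEXT3S : ∀ (y : T8) (s1 : ℤˣ) (S : Finset (Fin 4 × ℤˣ)), S.card ≤ 3 →
    ∃ p, Eok p y s1 ∧ (mkblk p.1, p.2) ∉ S := by decide

set_option maxRecDepth 10000 in
theorem EokSymm : ∀ (p q : T8) (s : ℤˣ), Eok p q s → Eok q p s := by decide

/-- Avoid any `< 8` given bad (block, sign) pairs. -/
theorem freeColor (S : Finset (Fin 4 × ℤˣ)) (h : S.card < 8) :
    ∃ p : T8, (mkblk p.1, p.2) ∉ S := by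
  have hcard : Fintype.card (Fin 4 × ℤˣ) = 8 := by decide
  have : Sᶜ.Nonempty := by
    rw [← Finset.card_pos, Finset.card_compl, hcard]
    omega
  obtain ⟨⟨b, e⟩, hbe⟩ := this
  rw [Finset.mem_compl] at hbe
  refine ⟨(⟨2 * (b : ℕ), by omega⟩, e), ?_⟩
  have hb : mkblk ⟨2 * (b : ℕ), by omega⟩ = b := by
    apply Fin.ext
    simp only [mkblk]
    omega
  rw [hb]
  exact hbe

theorem BadP_iff_pair (p : T8) (x : Fin 8) (e : ℤˣ) :
    BadP p ((x:ℕ)/2) e ↔ (mkblk p.1, p.2) = (mkblk x, e) := by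
  unfold BadP mkblk
  constructor
  · rintro ⟨h1, h2⟩; simp [Prod.ext_iff, Fin.ext_iff, h1, h2]
  · rintro h; simp [Prod.ext_iff, Fin.ext_iff] at h; exact ⟨h.1, h.2⟩

theorem Eok_iff (p q : T8) (s : ℤˣ) :
    Eok p q s ↔ ((DSGGraph (⊤ : SimpleGraph (Fin 8))).Adj p q ∧
      DSGSign (matchSign 8) s(p, q) = s) := by
  have h1 : (DSGGraph (⊤ : SimpleGraph (Fin 8))).Adj p q ↔ p.1 ≠ q.1 := by
    simp [DSGGraph]
  have h2 : DSGSign (matchSign 8) s(p, q)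
      = p.2 * q.2 * (if (p.1 : ℕ) / 2 = (q.1 : ℕ) / 2 then (-1 : ℤˣ) else 1) := by
    simp [DSGSign, matchSign, Sym2.lift_mk]
  rw [h2, h1]
  unfold Eok
  tauto

set_option linter.unusedSectionVars false

/-! ### Restriction of a graph to a finset -/

section Restrict

variable {V : Type*} [Fintype V] [DecidableEq V] (G : SimpleGraph V) [DecidableRel G.Adj]

def restrict (s : Finset V) : SimpleGraph V where
  Adj x y := x ∈ s ∧ y ∈ s ∧ G.Adj x y
  symm := ⟨by rintro x y ⟨hx, hy, h⟩; exact ⟨hy, hx, h.symm⟩⟩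
  loopless := ⟨fun x h => G.irrefl h.2.2⟩

instance (s : Finset V) : DecidableRel (restrict G s).Adj :=
  fun a b => decidable_of_iff (a ∈ s ∧ b ∈ s ∧ G.Adj a b) Iff.rfl

/-- degree in `s`. -/
def dgr (s : Finset V) (v : V) : ℕ := (s.filter (G.Adj v)).card

/-- number of neighbours in `s` which are 2-vertices of `s`. -/
def k2 (s : Finset V) (v : V) : ℕ :=
  (s.filter (fun u => G.Adj v u ∧ dgr G s u = 2)).card

theorem restrict_degree_eq (s : Finset V) (v : V) (hv : v ∈ s) :
    (restrict G s).degree v = dgr G s v := by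
  unfold dgr
  rw [← SimpleGraph.card_neighborFinset_eq_degree]
  congr 1
  ext u
  simp only [SimpleGraph.mem_neighborFinset, Finset.mem_filter]
  constructor
  · rintro ⟨_, hu, h⟩; exact ⟨hu, h⟩
  · rintro ⟨hu, h⟩; exact ⟨hv, hu, h⟩

theorem restrict_degree_zero (s : Finset V) (v : V) (hv : v ∉ s) :
    (restrict G s).degree v = 0 := by
  rw [← SimpleGraph.card_neighborFinset_eq_degree]
  rw [Finset.card_eq_zero]
  ext u
  simp only [SimpleGraph.mem_neighborFinset, Finset.notMem_empty, iff_false]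
  rintro ⟨h, -, -⟩; exact hv h

/-- Handshake within `s`: the degree sum within `s` is twice the number of internal edges. -/
theorem sum_dgr_eq (s : Finset V) :
    ∑ v ∈ s, dgr G s v = 2 * (restrict G s).edgeFinset.card := by
  rw [← SimpleGraph.sum_degrees_eq_twice_card_edges]
  rw [← Finset.sum_subset (Finset.subset_univ s)]
  · exact Finset.sum_congr rfl fun v hv => (restrict_degree_eq G s v hv).symm
  · intro x _ hx; exact restrict_degree_zero G s x hx

/-- `MadLT` gives the strict degree-sum bound on every nonempty finset. -/
theorem sum_dgr_lt (hmad : MadLT G 3) (s : Finset V) (hne : s.Nonempty) :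
    ∑ v ∈ s, dgr G s v < 3 * s.card := by
  classical
  set Hs : G.Subgraph :=
    { verts := ↑s
      Adj := (restrict G s).Adj
      adj_sub := fun h => h.2.2
      edge_vert := fun h => h.1
      symm := (restrict G s).symm } with hHs
  have hedge : Hs.edgeSet = (restrict G s).edgeSet := by
    ext e
    refine e.ind (fun a b => ?_)
    simp [SimpleGraph.Subgraph.mem_edgeSet, SimpleGraph.mem_edgeSet, hHs]
  have hecard : Hs.edgeSet.ncard = (restrict G s).edgeFinset.card := by
    rw [hedge]
    rw [Set.ncard_eq_toFinset_card' ((restrict G s).edgeSet)]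
    exact congrArg Finset.card (by ext e; simp)
  have hvcard : Hs.verts.ncard = s.card := by
    simp [hHs, Set.ncard_coe_finset]
  have hQ := hmad Hs (by obtain ⟨v, hv⟩ := hne; exact ⟨v, by simp [hHs, hv]⟩)
  rw [hecard, hvcard] at hQ
  have : (2 * (restrict G s).edgeFinset.card : ℚ) < 3 * (s.card : ℚ) := by
    exact_mod_cast hQ
  have h2 : 2 * (restrict G s).edgeFinset.card < 3 * s.card := by exact_mod_cast this
  rw [sum_dgr_eq]
  exact h2

end Restrict

/-! ### Discharging -/

section Discharge

variable {V : Type*} [Fintype V] [DecidableEq V] (G : SimpleGraph V) [DecidableRel G.Adj]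

theorem k2_le_dgr (s : Finset V) (v : V) : k2 G s v ≤ dgr G s v :=
  Finset.card_le_card (Finset.filter_subset_filter _ (by intro u hu; exact hu) |>.trans
    (by intro u hu; simp only [Finset.mem_filter] at hu ⊢; exact ⟨hu.1, hu.2.1⟩))

theorem sum_k2_eq (s : Finset V) :
    ∑ v ∈ s, k2 G s v = ∑ u ∈ s, (if dgr G s u = 2 then 2 else 0) := by
  unfold k2
  have h1 : ∀ v ∈ s, (s.filter (fun u => G.Adj v u ∧ dgr G s u = 2)).card
      = ∑ u ∈ s, (if G.Adj v u ∧ dgr G s u = 2 then 1 else 0) := by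
    intro v _
    rw [Finset.card_filter]
  rw [Finset.sum_congr rfl h1, Finset.sum_comm]
  refine Finset.sum_congr rfl (fun u hu => ?_)
  by_cases h : dgr G s u = 2
  · simp only [h, and_true, if_true]
    have : ∑ v ∈ s, (if G.Adj v u then 1 else 0) = (s.filter (fun v => G.Adj v u)).card := by
      rw [Finset.card_filter]
    rw [this]
    have : s.filter (fun v => G.Adj v u) = s.filter (G.Adj u) := by
      ext x; simp [SimpleGraph.adj_comm]
    rw [this]
    exact h
  · simp [h]

theorem discharge (s : Finset V)
    (h1 : ∀ v ∈ s, 2 ≤ dgr G s v)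
    (h2 : ∀ v ∈ s, dgr G s v = 2 → ∀ u ∈ s, G.Adj v u → 4 ≤ dgr G s u)
    (h3 : ∀ v ∈ s, dgr G s v = 4 → k2 G s v ≤ 2)
    (h4 : ∀ v ∈ s, dgr G s v = 5 → k2 G s v ≤ 4) :
    3 * s.card ≤ ∑ v ∈ s, dgr G s v := by
  have key : ∀ v ∈ s, k2 G s v + 6 ≤ 2 * dgr G s v + (if dgr G s v = 2 then 2 else 0) := by
    intro v hv
    have hk : k2 G s v ≤ dgr G s v := k2_le_dgr G s v
    have hd2 : 2 ≤ dgr G s v := h1 v hv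
    rcases Nat.lt_or_ge (dgr G s v) 6 with hlt | hge
    · interval_cases h : dgr G s v
      · -- d = 2 : k2 = 0
        have hk0 : k2 G s v = 0 := by
          unfold k2
          rw [Finset.card_eq_zero, Finset.eq_empty_iff_forall_notMem]
          intro u hu
          simp only [Finset.mem_filter] at hu
          have := h2 v hv h u hu.1 hu.2.1
          omega
        simp [hk0]
      · -- d = 3 : k2 = 0
        have hk0 : k2 G s v = 0 := by
          unfold k2
          rw [Finset.card_eq_zero, Finset.eq_empty_iff_forall_notMem]
          intro u hu
          simp only [Finset.mem_filter] at hu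
          have := h2 u hu.1 hu.2.2 v hv hu.2.1.symm
          omega
        simp [hk0]
      · have := h3 v hv h; omega
      · have := h4 v hv h; omega
    · have : ¬ (dgr G s v = 2) := by omega
      simp only [this, if_false]
      omega
  have hsum := Finset.sum_le_sum key
  have e1 : ∑ v ∈ s, (k2 G s v + 6) = (∑ v ∈ s, k2 G s v) + 6 * s.card := by
    rw [Finset.sum_add_distrib]
    simp [Finset.sum_const, mul_comm]
  have e2 : ∑ v ∈ s, (2 * dgr G s v + (if dgr G s v = 2 then 2 else 0))
      = 2 * (∑ v ∈ s, dgr G s v) + ∑ v ∈ s, (if dgr G s v = 2 then 2 else 0) := by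
    rw [Finset.sum_add_distrib, Finset.mul_sum]
  rw [e1, e2, ← sum_k2_eq] at hsum
  omega

end Discharge

/-! ### The main induction -/

section Main

variable {V : Type*} [Fintype V] [DecidableEq V]

theorem pair_other {A : Finset V} (h : A.card = 2) {u : V} (hu : u ∈ A) :
    ∃ w, w ≠ u ∧ A = {u, w} := by
  obtain ⟨x, y, hxy, hA⟩ := Finset.card_eq_two.mp h
  subst hA
  rcases Finset.mem_insert.mp hu with rfl | hu'
  · exact ⟨y, fun h => hxy h.symm, rfl⟩
  · rw [Finset.mem_singleton] at hu'
    subst hu'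
    exact ⟨x, fun h => hxy h, by rw [Finset.pair_comm]⟩

theorem sigma_swap {W : Type*} (σ : Sym2 W → ℤˣ) (u v : W) : σ s(u, v) = σ s(v, u) := by
  rw [Sym2.eq_swap]

theorem EokSwap {W : Type*} (σ : Sym2 W → ℤˣ) {p q : T8} {x y : W}
    (h : Eok p q (σ s(x, y))) : Eok q p (σ s(y, x)) := by
  rw [sigma_swap σ y x]
  exact EokSymm _ _ _ h

variable (G : SimpleGraph V) [DecidableRel G.Adj] (σ : Sym2 V → ℤˣ)

theorem inner (hmad : MadLT G 3) :
    ∀ (n : ℕ) (s : Finset V), s.card ≤ n →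
      ∃ f : V → T8, ∀ u ∈ s, ∀ v ∈ s, G.Adj u v → Eok (f u) (f v) (σ s(u, v)) := by
  intro n
  induction n with
  | zero =>
    intro s hs
    have : s = ∅ := Finset.card_eq_zero.mp (Nat.le_zero.mp hs)
    subst this
    exact ⟨fun _ => ((0 : Fin 8), 1), by simp⟩
  | succ n IH =>
    intro s hcard
    rcases s.eq_empty_or_nonempty with rfl | hne
    · exact ⟨fun _ => ((0 : Fin 8), 1), by simp⟩
    by_cases hR1 : ∃ v ∈ s, dgr G s v ≤ 1
    · -- R1: a vertex of degree at most 1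
      obtain ⟨v, hv, hdv⟩ := hR1
      have hcard' : (s.erase v).card ≤ n := by
        rw [Finset.card_erase_of_mem hv]; omega
      obtain ⟨f', hf'⟩ := IH (s.erase v) hcard'
      by_cases hd0 : dgr G s v = 0
      · refine ⟨f', ?_⟩
        intro x hx y hy hadj
        have hxv : x ≠ v := by
          rintro rfl
          have : y ∈ s.filter (G.Adj x) := Finset.mem_filter.mpr ⟨hy, hadj⟩
          have : 0 < dgr G s x := Finset.card_pos.mpr ⟨y, this⟩
          omega
        have hyv : y ≠ v := by
          rintro rfl
          have : x ∈ s.filter (G.Adj y) := Finset.mem_filter.mpr ⟨hx, hadj.symm⟩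
          have : 0 < dgr G s y := Finset.card_pos.mpr ⟨x, this⟩
          omega
        exact hf' x (Finset.mem_erase.mpr ⟨hxv, hx⟩) y (Finset.mem_erase.mpr ⟨hyv, hy⟩) hadj
      · have hd1 : dgr G s v = 1 := by omega
        obtain ⟨y, hyA⟩ := Finset.card_eq_one.mp hd1
        have hy_mem : y ∈ s.filter (G.Adj v) := by rw [hyA]; exact Finset.mem_singleton_self y
        have hy_s : y ∈ s := (Finset.mem_filter.mp hy_mem).1
        have hy_adj : G.Adj v y := (Finset.mem_filter.mp hy_mem).2
        have hyv : y ≠ v := fun h => G.loopless.irrefl v (h ▸ hy_adj)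
        obtain ⟨p, hp, -⟩ := LEXT3S (f' y) (σ s(v, y)) ∅ (by simp)
        refine ⟨Function.update f' v p, ?_⟩
        intro x hx z hz hadj
        rcases eq_or_ne x v with rfl | hxv
        · have hzy : z = y := by
            have : z ∈ s.filter (G.Adj x) := Finset.mem_filter.mpr ⟨hz, hadj⟩
            rw [hyA] at this
            exact Finset.mem_singleton.mp this
          subst hzy
          rw [Function.update_self, Function.update_of_ne hyv]
          exact hp
        · rcases eq_or_ne z v with rfl | hzv
          · have hxy : x = y := by
              have : x ∈ s.filter (G.Adj z) := Finset.mem_filter.mpr ⟨hx, hadj.symm⟩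
              rw [hyA] at this
              exact Finset.mem_singleton.mp this
            subst hxy
            rw [Function.update_self, Function.update_of_ne hyv]
            exact EokSwap σ hp
          · rw [Function.update_of_ne hxv, Function.update_of_ne hzv]
            exact hf' x (Finset.mem_erase.mpr ⟨hxv, hx⟩) z (Finset.mem_erase.mpr ⟨hzv, hz⟩) hadj
    · push_neg at hR1
      by_cases hR2 : ∃ v ∈ s, dgr G s v = 2 ∧ ∃ u ∈ s, G.Adj v u ∧ dgr G s u ≤ 3
      · -- R2: a 2-vertex v with a neighbour u of degree ≤ 3
        obtain ⟨v, hv, hdv, u, hu, hadj_vu, hdu⟩ := hR2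
        have hu_memA : u ∈ s.filter (G.Adj v) := Finset.mem_filter.mpr ⟨hu, hadj_vu⟩
        obtain ⟨w, hwu, hA⟩ := pair_other hdv hu_memA
        have hw_mem : w ∈ s.filter (G.Adj v) := by
          rw [hA]; simp
        have hw_s : w ∈ s := (Finset.mem_filter.mp hw_mem).1
        have hadj_vw : G.Adj v w := (Finset.mem_filter.mp hw_mem).2
        have huv : u ≠ v := fun h => G.loopless.irrefl v (h ▸ hadj_vu)
        have hwv : w ≠ v := fun h => G.loopless.irrefl v (h ▸ hadj_vw)
        set s' := s.erase v with hs'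
        have hcard' : s'.card ≤ n := by
          rw [hs', Finset.card_erase_of_mem hv]; omega
        obtain ⟨f', hf'⟩ := IH s' hcard'
        have hu_s' : u ∈ s' := Finset.mem_erase.mpr ⟨huv, hu⟩
        have hw_s' : w ∈ s' := Finset.mem_erase.mpr ⟨hwv, hw_s⟩
        set Nu := s'.filter (G.Adj u) with hNudef
        have hNu : Nu = (s.filter (G.Adj u)).erase v := by
          ext t
          simp only [hNudef, hs', Finset.mem_filter, Finset.mem_erase]
          tauto
        have hNcard : Nu.card ≤ 2 := by
          rw [hNu, Finset.card_erase_of_mem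
            (Finset.mem_filter.mpr ⟨hv, hadj_vu.symm⟩)]
          have : (s.filter (G.Adj u)).card = dgr G s u := rfl
          omega
        have hNmem : ∀ t ∈ Nu, t ∈ s' ∧ G.Adj u t := by
          intro t ht
          exact ⟨(Finset.mem_filter.mp ht).1, (Finset.mem_filter.mp ht).2⟩
        -- the bad data coming from the pending 2-vertex v with far endpoint w
        set bb : Fin 4 := mkblk (f' w).1 with hbb
        set ee : ℤˣ := -((f' w).2 * σ s(v, w) * σ s(v, u)) with hee
        have key : ∃ p, (∀ y ∈ Nu, Eok p (f' y) (σ s(u, y))) ∧ ¬ BadP p (bb : ℕ) ee := by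
          rcases Nat.lt_or_ge Nu.card 1 with h0 | h1
          · -- no constraints
            obtain ⟨p, hp⟩ := freeColor {(bb, ee)} (by simp)
            refine ⟨p, ?_, ?_⟩
            · intro y hy
              exfalso
              have : 0 < Nu.card := Finset.card_pos.mpr ⟨y, hy⟩
              omega
            · intro hbad
              apply hp
              have : BadP p (((f' w).1 : ℕ)/2) ee := hbad
              rw [BadP_iff_pair] at this
              simp [this, hbb]
          · rcases Nat.lt_or_ge Nu.card 2 with h1' | h2
            · have hc1 : Nu.card = 1 := by omega
              obtain ⟨y, hy⟩ := Finset.card_eq_one.mp hc1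
              have hy_mem : y ∈ Nu := by rw [hy]; exact Finset.mem_singleton_self y
              obtain ⟨hy_s', hy_adj⟩ := hNmem y hy_mem
              obtain ⟨p, hp1, hp2⟩ := LEXT3S (f' y) (σ s(u, y)) {(bb, ee)} (by simp)
              refine ⟨p, ?_, ?_⟩
              swap
              · intro hbad
                apply hp2
                have hbad' : BadP p (((f' w).1 : ℕ)/2) ee := hbad
                rw [BadP_iff_pair] at hbad'
                rw [hbad']
                simp [hbb]
              intro t ht
              have : t = y := by rw [hy] at ht; exact Finset.mem_singleton.mp ht
              subst this
              exact hp1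
            · have hc2 : Nu.card = 2 := by omega
              obtain ⟨y1, y2, hy12, hy⟩ := Finset.card_eq_two.mp hc2
              have hy1_mem : y1 ∈ Nu := by rw [hy]; simp
              have hy2_mem : y2 ∈ Nu := by rw [hy]; simp
              obtain ⟨hy1_s', hy1_adj⟩ := hNmem y1 hy1_mem
              obtain ⟨hy2_s', hy2_adj⟩ := hNmem y2 hy2_mem
              have h01 : Eok (f' u) (f' y1) (σ s(u, y1)) := hf' u hu_s' y1 hy1_s' hy1_adj
              have h02 : Eok (f' u) (f' y2) (σ s(u, y2)) := hf' u hu_s' y2 hy2_s' hy2_adj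
              obtain ⟨p, hp1, hp2, hp3⟩ :=
                LEXT2 (f' y1) (f' y2) (f' u) (σ s(u, y1)) (σ s(u, y2)) h01 h02 bb ee
              refine ⟨p, ?_, hp3⟩
              intro t ht
              rw [hy] at ht
              rcases Finset.mem_insert.mp ht with rfl | ht'
              · exact hp1
              · rw [Finset.mem_singleton.mp ht']
                exact hp2
        obtain ⟨p, hpN, hpB⟩ := key
        have hpB' : ¬ BadP p (((f' w).1 : ℕ)/2) (-((f' w).2 * σ s(v, w) * σ s(v, u))) := by
          rw [← hee]
          exact hpB
        obtain ⟨r, hr1, hr2⟩ := LBpath p (f' w) (σ s(v, u)) (σ s(v, w)) hpB'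
        set f : V → T8 := Function.update (Function.update f' u p) v r with hfdef
        have hfv : f v = r := by simp [hfdef]
        have hfu : f u = p := by
          rw [hfdef, Function.update_of_ne huv, Function.update_self]
        have hfother : ∀ t, t ≠ v → t ≠ u → f t = f' t := by
          intro t h1 h2
          rw [hfdef, Function.update_of_ne h1, Function.update_of_ne h2]
        have hfw : f w = f' w := hfother w hwv hwu
        refine ⟨f, ?_⟩
        have main_v : ∀ z ∈ s, G.Adj v z → Eok (f v) (f z) (σ s(v, z)) := by
          intro z hz hadj
          have hz_mem : z ∈ s.filter (G.Adj v) := Finset.mem_filter.mpr ⟨hz, hadj⟩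
          rw [hA] at hz_mem
          rcases Finset.mem_insert.mp hz_mem with rfl | hz'
          · rw [hfv, hfu]
            exact EokSymm _ _ _ hr1
          · rw [Finset.mem_singleton.mp hz']
            rw [hfv, hfw]
            exact hr2
        have main_u : ∀ z ∈ s, z ≠ v → G.Adj u z → Eok (f u) (f z) (σ s(u, z)) := by
          intro z hz hzv hadj
          have hz_s' : z ∈ s' := Finset.mem_erase.mpr ⟨hzv, hz⟩
          have hz_Nu : z ∈ Nu := Finset.mem_filter.mpr ⟨hz_s', hadj⟩
          have hzu : z ≠ u := fun h => G.loopless.irrefl u (h ▸ hadj)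
          rw [hfu, hfother z hzv hzu]
          exact hpN z hz_Nu
        intro x hx z hz hadj
        rcases eq_or_ne x v with rfl | hxv
        · exact main_v z hz hadj
        · rcases eq_or_ne z v with rfl | hzv
          · exact EokSwap σ (main_v x hx hadj.symm)
          · rcases eq_or_ne x u with rfl | hxu
            · exact main_u z hz hzv hadj
            · rcases eq_or_ne z u with rfl | hzu
              · exact EokSwap σ (main_u x hx hxv hadj.symm)
              · rw [hfother x hxv hxu, hfother z hzv hzu]
                exact hf' x (Finset.mem_erase.mpr ⟨hxv, hx⟩) z
                  (Finset.mem_erase.mpr ⟨hzv, hz⟩) hadj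
      · push_neg at hR2
        by_cases hR3 : ∃ v ∈ s, dgr G s v = 4 ∧ 3 ≤ k2 G s v
        · -- R3: a 4-vertex with at least three 2-neighbours
          obtain ⟨v, hv, hdv, hkv⟩ := hR3
          set A := s.filter (G.Adj v) with hAdef
          set B := s.filter (fun u => G.Adj v u ∧ dgr G s u = 2) with hBdef
          have hBA : B ⊆ A := by
            intro t ht
            simp only [hAdef, hBdef, Finset.mem_filter] at ht ⊢
            exact ⟨ht.1, ht.2.1⟩
          obtain ⟨t3, ht3B, ht3card⟩ := Finset.exists_subset_card_eq hkv
          have ht3A : t3 ⊆ A := ht3B.trans hBA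
          have ht3s : t3 ⊆ s := ht3A.trans (Finset.filter_subset _ _)
          have ht3deg : ∀ a ∈ t3, a ∈ s ∧ G.Adj v a ∧ dgr G s a = 2 := by
            intro a ha
            have := ht3B ha
            simp only [hBdef, Finset.mem_filter] at this
            exact ⟨this.1, this.2.1, this.2.2⟩
          have hvA : v ∉ A := by
            simp [hAdef, Finset.mem_filter]
          have hvt3 : v ∉ t3 := fun h => hvA (ht3A h)
          have hAcard : A.card = 4 := hdv
          have hYcard : (A \ t3).card = 1 := by
            rw [Finset.card_sdiff_of_subset ht3A, hAcard, ht3card]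
          obtain ⟨y, hy⟩ := Finset.card_eq_one.mp hYcard
          have hy_mem : y ∈ A \ t3 := by rw [hy]; exact Finset.mem_singleton_self y
          have hyA : y ∈ A := (Finset.mem_sdiff.mp hy_mem).1
          have hyt3 : y ∉ t3 := (Finset.mem_sdiff.mp hy_mem).2
          have hy_s : y ∈ s := (Finset.mem_filter.mp hyA).1
          have hy_adj : G.Adj v y := (Finset.mem_filter.mp hyA).2
          have hyv : y ≠ v := fun h => G.loopless.irrefl v (h ▸ hy_adj)
          have hAmem : ∀ z ∈ A, z ∈ t3 ∨ z = y := by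
            intro z hz
            by_cases h : z ∈ t3
            · exact Or.inl h
            · right
              have : z ∈ A \ t3 := Finset.mem_sdiff.mpr ⟨hz, h⟩
              rw [hy] at this
              exact Finset.mem_singleton.mp this
          set s' := s \ t3 with hs'def
          have hcard' : s'.card ≤ n := by
            rw [hs'def, Finset.card_sdiff_of_subset ht3s, ht3card]
            have : 0 < s.card := Finset.card_pos.mpr ⟨v, hv⟩
            omega
          obtain ⟨f', hf'⟩ := IH s' hcard'
          have hv_s' : v ∈ s' := Finset.mem_sdiff.mpr ⟨hv, hvt3⟩
          have hy_s' : y ∈ s' := Finset.mem_sdiff.mpr ⟨hy_s, hyt3⟩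
          have hW : ∀ a ∈ t3, ∃ w, w ≠ v ∧ w ∈ s ∧ G.Adj a w ∧
              s.filter (G.Adj a) = {v, w} ∧ w ∉ t3 := by
            intro a ha
            obtain ⟨ha_s, ha_adj, ha_deg⟩ := ht3deg a ha
            have hv_memf : v ∈ s.filter (G.Adj a) := Finset.mem_filter.mpr ⟨hv, ha_adj.symm⟩
            obtain ⟨w, hw_ne, hw_eq⟩ := pair_other ha_deg hv_memf
            have hw_mem : w ∈ s.filter (G.Adj a) := by rw [hw_eq]; simp
            have hw_s : w ∈ s := (Finset.mem_filter.mp hw_mem).1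
            have hw_adj : G.Adj a w := (Finset.mem_filter.mp hw_mem).2
            have hw_deg : 3 < dgr G s w := hR2 a ha_s ha_deg w hw_s hw_adj
            have hw_t3 : w ∉ t3 := by
              intro hwt
              have := (ht3deg w hwt).2.2
              omega
            exact ⟨w, hw_ne, hw_s, hw_adj, hw_eq, hw_t3⟩
          choose W hWv hWs hWadj hWfil hWt3 using hW
          set SS := t3.attach.image (fun a =>
            ((mkblk ((f' (W a.1 a.2)).1) : Fin 4),
              -((f' (W a.1 a.2)).2 * σ s(a.1, W a.1 a.2) * σ s(v, a.1)))) with hSS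
          have hSScard : SS.card ≤ 3 := by
            calc SS.card ≤ t3.attach.card := Finset.card_image_le
            _ = 3 := by rw [Finset.card_attach, ht3card]
          obtain ⟨p, hpE, hpS⟩ := LEXT3S (f' y) (σ s(v, y)) SS hSScard
          have hpB : ∀ a (ha : a ∈ t3), ¬ BadP p (((f' (W a ha)).1 : ℕ)/2)
              (-((f' (W a ha)).2 * σ s(a, W a ha) * σ s(v, a))) := by
            intro a ha hbad
            apply hpS
            rw [BadP_iff_pair] at hbad
            rw [hSS, Finset.mem_image]
            exact ⟨⟨a, ha⟩, Finset.mem_attach _ _, hbad.symm⟩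
          have hExt : ∀ a (ha : a ∈ t3), ∃ r, Eok p r (σ s(v, a)) ∧
              Eok r (f' (W a ha)) (σ s(a, W a ha)) :=
            fun a ha => LBpath p (f' (W a ha)) (σ s(v, a)) (σ s(a, W a ha)) (hpB a ha)
          choose R hRa hRb using hExt
          set f : V → T8 := fun z => if hz : z ∈ t3 then R z hz else if z = v then p else f' z
            with hfdef
          have hfv : f v = p := by rw [hfdef]; simp [hvt3]
          have hfa : ∀ a (ha : a ∈ t3), f a = R a ha := by
            intro a ha; rw [hfdef]; simp [ha]
          have hfother : ∀ z, z ∉ t3 → z ≠ v → f z = f' z := by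
            intro z h1 h2; rw [hfdef]; simp [h1, h2]
          have hfy : f y = f' y := hfother y hyt3 hyv
          refine ⟨f, ?_⟩
          have main_v : ∀ z ∈ s, G.Adj v z → Eok (f v) (f z) (σ s(v, z)) := by
            intro z hz hadj
            have hzA : z ∈ A := Finset.mem_filter.mpr ⟨hz, hadj⟩
            rcases hAmem z hzA with hzt | rfl
            · rw [hfv, hfa z hzt]
              exact hRa z hzt
            · rw [hfv, hfy]
              exact hpE
          have main_a : ∀ a (ha : a ∈ t3), ∀ z ∈ s, z ≠ v → G.Adj a z →
              Eok (f a) (f z) (σ s(a, z)) := by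
            intro a ha z hz hzv hadj
            have hz_mem : z ∈ s.filter (G.Adj a) := Finset.mem_filter.mpr ⟨hz, hadj⟩
            rw [hWfil a ha] at hz_mem
            rcases Finset.mem_insert.mp hz_mem with rfl | hz'
            · exact absurd rfl hzv
            · have hzW : z = W a ha := Finset.mem_singleton.mp hz'
              subst hzW
              rw [hfa a ha, hfother _ (hWt3 a ha) (hWv a ha)]
              exact hRb a ha
          intro x hx z hz hadj
          by_cases hxt : x ∈ t3
          · rcases eq_or_ne z v with rfl | hzv
            · exact EokSwap σ (main_v x hx hadj.symm)
            · exact main_a x hxt z hz hzv hadj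
          · by_cases hzt : z ∈ t3
            · rcases eq_or_ne x v with rfl | hxv
              · exact main_v z hz hadj
              · exact EokSwap σ (main_a z hzt x hx hxv hadj.symm)
            · rcases eq_or_ne x v with rfl | hxv
              · exact main_v z hz hadj
              · rcases eq_or_ne z v with rfl | hzv
                · exact EokSwap σ (main_v x hx hadj.symm)
                · rw [hfother x hxt hxv, hfother z hzt hzv]
                  exact hf' x (Finset.mem_sdiff.mpr ⟨hx, hxt⟩) z
                    (Finset.mem_sdiff.mpr ⟨hz, hzt⟩) hadj
        · push_neg at hR3
          by_cases hR4 : ∃ v ∈ s, dgr G s v = 5 ∧ 5 ≤ k2 G s v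
          · -- R4: a 5-vertex all of whose neighbours are 2-vertices
            obtain ⟨v, hv, hdv, hkv⟩ := hR4
            set A := s.filter (G.Adj v) with hAdef
            set B := s.filter (fun u => G.Adj v u ∧ dgr G s u = 2) with hBdef
            have hBA : B ⊆ A := by
              intro t ht
              simp only [hAdef, hBdef, Finset.mem_filter] at ht ⊢
              exact ⟨ht.1, ht.2.1⟩
            have hAcard : A.card = 5 := hdv
            have hABeq : B = A := by
              apply Finset.eq_of_subset_of_card_le hBA
              rw [hAcard]
              exact hkv
            have hAdeg : ∀ a ∈ A, a ∈ s ∧ G.Adj v a ∧ dgr G s a = 2 := by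
              intro a ha
              rw [← hABeq] at ha
              simp only [hBdef, Finset.mem_filter] at ha
              exact ⟨ha.1, ha.2.1, ha.2.2⟩
            have hvA : v ∉ A := by
              simp [hAdef, Finset.mem_filter]
            set s' := s \ A with hs'def
            have hcard' : s'.card ≤ n := by
              rw [hs'def, Finset.card_sdiff_of_subset (Finset.filter_subset _ _), hAcard]
              have : 0 < s.card := Finset.card_pos.mpr ⟨v, hv⟩
              omega
            obtain ⟨f', hf'⟩ := IH s' hcard'
            have hv_s' : v ∈ s' := Finset.mem_sdiff.mpr ⟨hv, hvA⟩
            have hW : ∀ a ∈ A, ∃ w, w ≠ v ∧ w ∈ s ∧ G.Adj a w ∧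
                s.filter (G.Adj a) = {v, w} ∧ w ∉ A := by
              intro a ha
              obtain ⟨ha_s, ha_adj, ha_deg⟩ := hAdeg a ha
              have hv_memf : v ∈ s.filter (G.Adj a) := Finset.mem_filter.mpr ⟨hv, ha_adj.symm⟩
              obtain ⟨w, hw_ne, hw_eq⟩ := pair_other ha_deg hv_memf
              have hw_mem : w ∈ s.filter (G.Adj a) := by rw [hw_eq]; simp
              have hw_s : w ∈ s := (Finset.mem_filter.mp hw_mem).1
              have hw_adj : G.Adj a w := (Finset.mem_filter.mp hw_mem).2
              have hw_deg : 3 < dgr G s w := hR2 a ha_s ha_deg w hw_s hw_adj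
              have hw_A : w ∉ A := by
                intro hwA
                have := (hAdeg w hwA).2.2
                omega
              exact ⟨w, hw_ne, hw_s, hw_adj, hw_eq, hw_A⟩
            choose W hWv hWs hWadj hWfil hWA using hW
            set SS := A.attach.image (fun a =>
              ((mkblk ((f' (W a.1 a.2)).1) : Fin 4),
                -((f' (W a.1 a.2)).2 * σ s(a.1, W a.1 a.2) * σ s(v, a.1)))) with hSS
            have hSScard : SS.card < 8 := by
              have : SS.card ≤ A.attach.card := Finset.card_image_le
              rw [Finset.card_attach, hAcard] at this
              omega
            obtain ⟨p, hpS⟩ := freeColor SS hSScard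
            have hpB : ∀ a (ha : a ∈ A), ¬ BadP p (((f' (W a ha)).1 : ℕ)/2)
                (-((f' (W a ha)).2 * σ s(a, W a ha) * σ s(v, a))) := by
              intro a ha hbad
              apply hpS
              rw [BadP_iff_pair] at hbad
              rw [hSS, Finset.mem_image]
              exact ⟨⟨a, ha⟩, Finset.mem_attach _ _, hbad.symm⟩
            have hExt : ∀ a (ha : a ∈ A), ∃ r, Eok p r (σ s(v, a)) ∧
                Eok r (f' (W a ha)) (σ s(a, W a ha)) :=
              fun a ha => LBpath p (f' (W a ha)) (σ s(v, a)) (σ s(a, W a ha)) (hpB a ha)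
            choose R hRa hRb using hExt
            set f : V → T8 := fun z => if hz : z ∈ A then R z hz else if z = v then p else f' z
              with hfdef
            have hfv : f v = p := by rw [hfdef]; simp [hvA]
            have hfa : ∀ a (ha : a ∈ A), f a = R a ha := by
              intro a ha; rw [hfdef]; simp [ha]
            have hfother : ∀ z, z ∉ A → z ≠ v → f z = f' z := by
              intro z h1 h2; rw [hfdef]; simp [h1, h2]
            refine ⟨f, ?_⟩
            have main_v : ∀ z ∈ s, G.Adj v z → Eok (f v) (f z) (σ s(v, z)) := by
              intro z hz hadj
              have hzA : z ∈ A := Finset.mem_filter.mpr ⟨hz, hadj⟩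
              rw [hfv, hfa z hzA]
              exact hRa z hzA
            have main_a : ∀ a (ha : a ∈ A), ∀ z ∈ s, z ≠ v → G.Adj a z →
                Eok (f a) (f z) (σ s(a, z)) := by
              intro a ha z hz hzv hadj
              have hz_mem : z ∈ s.filter (G.Adj a) := Finset.mem_filter.mpr ⟨hz, hadj⟩
              rw [hWfil a ha] at hz_mem
              rcases Finset.mem_insert.mp hz_mem with rfl | hz'
              · exact absurd rfl hzv
              · have hzW : z = W a ha := Finset.mem_singleton.mp hz'
                subst hzW
                rw [hfa a ha, hfother _ (hWA a ha) (hWv a ha)]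
                exact hRb a ha
            intro x hx z hz hadj
            by_cases hxt : x ∈ A
            · rcases eq_or_ne z v with rfl | hzv
              · exact EokSwap σ (main_v x hx hadj.symm)
              · exact main_a x hxt z hz hzv hadj
            · by_cases hzt : z ∈ A
              · rcases eq_or_ne x v with rfl | hxv
                · exact main_v z hz hadj
                · exact EokSwap σ (main_a z hzt x hx hxv hadj.symm)
              · rcases eq_or_ne x v with rfl | hxv
                · exact main_v z hz hadj
                · rcases eq_or_ne z v with rfl | hzv
                  · exact EokSwap σ (main_v x hx hadj.symm)
                  · rw [hfother x hxt hxv, hfother z hzt hzv]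
                    exact hf' x (Finset.mem_sdiff.mpr ⟨hx, hxt⟩) z
                      (Finset.mem_sdiff.mpr ⟨hz, hzt⟩) hadj
          · -- no configuration: contradiction with the discharging bound
            push_neg at hR4
            exfalso
            have h1' : ∀ v ∈ s, 2 ≤ dgr G s v := by
              intro v hv
              have := hR1 v hv
              omega
            have h2' : ∀ v ∈ s, dgr G s v = 2 → ∀ u ∈ s, G.Adj v u → 4 ≤ dgr G s u := by
              intro v hv hd u hu hadj
              have := hR2 v hv hd u hu hadj
              omega
            have h3' : ∀ v ∈ s, dgr G s v = 4 → k2 G s v ≤ 2 := by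
              intro v hv hd
              have := hR3 v hv hd
              omega
            have h4' : ∀ v ∈ s, dgr G s v = 5 → k2 G s v ≤ 4 := by
              intro v hv hd
              have := hR4 v hv hd
              omega
            have hge := discharge G s h1' h2' h3' h4'
            have hlt := sum_dgr_lt G hmad s hne
            omega

end Main

/-! ### Final assembly -/

theorem units_helper1 : ∀ (α β M t : ℤˣ), α * β * M = t → M = α * β * t := by decide
theorem units_helper2 : ∀ (α β γ x y : ℤˣ), (α * β * x) * (β * γ * y) = α * γ * (x * y) := by
  decide
theorem units_helper3 : ∀ (α x : ℤˣ), α * α * x = x := by decide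

theorem matchSign_eval (x y : Fin 8) :
    matchSign 8 s(x, y) = (if (x : ℕ) / 2 = (y : ℕ) / 2 then (-1 : ℤˣ) else 1) := by
  simp [matchSign, Sym2.lift_mk]

theorem espHom_DSGK8M_of_madLT' {V : Type*} [Fintype V]
    (G : SimpleGraph V) (σ : Sym2 V → ℤˣ) (hmad : MadLT G 3) :
    ESPHom G σ (DSGGraph (⊤ : SimpleGraph (Fin 8))) (DSGSign (matchSign 8)) ∧
    SignedHom G σ (⊤ : SimpleGraph (Fin 8)) (matchSign 8) := by
  classical
  obtain ⟨f, hf⟩ := inner G σ hmad (Fintype.card V) Finset.univ (by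
    rw [Finset.card_univ])
  have hE : ∀ u v, G.Adj u v → Eok (f u) (f v) (σ s(u, v)) := fun u v h =>
    hf u (Finset.mem_univ u) v (Finset.mem_univ v) h
  constructor
  · -- the edge-sign preserving homomorphism to DSG(K_8, M)
    refine ⟨⟨f, ?_⟩, ?_⟩
    · intro a b h
      exact ((Eok_iff _ _ _).mp (hE a b h)).1
    · intro u v h
      exact ((Eok_iff _ _ _).mp (hE u v h)).2
  · -- the homomorphism to (K_8, M)
    have hmap : ∀ {a b : V}, G.Adj a b → (⊤ : SimpleGraph (Fin 8)).Adj (f a).1 (f b).1 := by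
      intro a b h
      have := (hE a b h).1
      simpa using this
    set f2 : G →g (⊤ : SimpleGraph (Fin 8)) := ⟨fun v => (f v).1, hmap⟩ with hf2
    refine ⟨f2, ?_⟩
    have hedge : ∀ a b : V, G.Adj a b →
        matchSign 8 s((f a).1, (f b).1) = (f a).2 * (f b).2 * σ s(a, b) := by
      intro a b h
      have h2 := (hE a b h).2
      rw [matchSign_eval]
      exact units_helper1 _ _ _ _ h2
    have key : ∀ {a b : V} (w : G.Walk a b),
        walkSign (matchSign 8) (w.map f2) = (f a).2 * (f b).2 * walkSign σ w := by
      intro a b w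
      induction w with
      | nil =>
        simp [walkSign, units_helper3]
      | @cons a c b hadj p ih =>
        have step : walkSign (matchSign 8) ((SimpleGraph.Walk.cons hadj p).map f2)
            = matchSign 8 s((f a).1, (f c).1) *
              walkSign (matchSign 8) (p.map f2) := by
          simp only [walkSign, SimpleGraph.Walk.map_cons, SimpleGraph.Walk.edges_cons,
            List.map_cons, List.prod_cons]
          rfl
        have step2 : walkSign σ (SimpleGraph.Walk.cons hadj p)
            = σ s(a, c) * walkSign σ p := by
          simp [walkSign, SimpleGraph.Walk.edges_cons]
        rw [step, step2, ih, hedge a c hadj]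
        exact units_helper2 _ _ _ _ _
    intro u w
    rw [key w]
    exact units_helper3 _ _


/-- Every signed graph with maximum average degree less than `3` admits an edge-sign preserving
homomorphism to `DSG(K_8, M)`; equivalently, it admits a homomorphism to `(K_8, M)`. -/
theorem espHom_DSGK8M_of_madLT {V : Type*} [Fintype V]
    (G : SimpleGraph V) (σ : Sym2 V → ℤˣ) (hmad : MadLT G 3) :
    ESPHom G σ (DSGGraph (⊤ : SimpleGraph (Fin 8))) (DSGSign (matchSign 8)) ∧
    SignedHom G σ (⊤ : SimpleGraph (Fin 8)) (matchSign 8) :=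
  espHom_DSGK8M_of_madLT' G σ hmad
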